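/- Let n ≥ 1, and for each i ∈ {1,…,n} let p_i ∈ (0,1) and y_i ∈ {0,1}, and define Q(Δ) = ∑_{i=1}^n ( log(Δ·p_i + 1 − p_i) − y_i·log Δ ) for Δ > 0. Suppose Δ₀ > 0 satisfies the stationarity equation ∑_{i=1}^n Δ₀·p_i/(Δ₀·p_i + 1 − p_i) = ∑_{i=1}^n y_i. Then Q is strictly increasing on the interval [Δ₀, ∞). -/

import Mathlib

open Finset

/-- Theorem 4 (monotonicity of `Q`): if `Δ₀ > 0` satisfies the
stationarity equation `∑ᵢ Δ₀·pᵢ/(Δ₀·pᵢ + 1 − pᵢ) = ∑ᵢ yᵢ`, then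
`Q(Δ) = ∑ᵢ (log(Δ·pᵢ + 1 − pᵢ) − yᵢ·log Δ)` is strictly increasing
on `[Δ₀, ∞)`. -/
theorem stmt_16 (n : ℕ) (hn : 1 ≤ n) (p y : Fin n → ℝ)
    (hp : ∀ i, p i ∈ Set.Ioo (0 : ℝ) 1) (hy : ∀ i, y i = 0 ∨ y i = 1)
    (Q : ℝ → ℝ)
    (hQ : ∀ Δ, Q Δ = ∑ i, (Real.log (Δ * p i + 1 - p i)
          - y i * Real.log Δ))
    (Δ₀ : ℝ) (hΔ₀ : 0 < Δ₀)
    (hstat : ∑ i, Δ₀ * p i / (Δ₀ * p i + 1 - p i) = ∑ i, y i) :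
    StrictMonoOn Q (Set.Ici Δ₀) := by
  have hQfun : Q = fun Δ => ∑ i, (Real.log (Δ * p i + 1 - p i) - y i * Real.log Δ) :=
    funext hQ
  subst hQfun
  have hD : ∀ x : ℝ, 0 < x → ∀ i, 0 < x * p i + 1 - p i := by
    intro x hx i
    have h1 := (hp i).1; have h2 := (hp i).2
    nlinarith
  apply strictMonoOn_of_deriv_pos (convex_Ici Δ₀)
  · apply continuousOn_finset_sum
    intro i _
    apply ContinuousOn.sub
    · apply ContinuousOn.log
      · exact (Continuous.continuousOn (by continuity))
      · intro t ht
        exact (hD t (lt_of_lt_of_le hΔ₀ ht) i).ne'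
    · exact (continuousOn_const.mul (Real.continuousOn_log.mono (by
        intro t ht
        exact (lt_of_lt_of_le hΔ₀ ht).ne')))
  · intro x hx
    rw [interior_Ici] at hx
    have hx0 : 0 < x := lt_trans hΔ₀ hx
    have hderiv : HasDerivAt (fun Δ => ∑ i, (Real.log (Δ * p i + 1 - p i) - y i * Real.log Δ))
        (∑ i, (p i / (x * p i + 1 - p i) - y i / x)) x := by
      apply HasDerivAt.fun_sum
      intro i _
      have hinner : HasDerivAt (fun t : ℝ => t * p i + 1 - p i) (p i) x := by
        have := (((hasDerivAt_id x).mul_const (p i)).add_const 1).sub_const (p i)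
        simpa using this
      have hlog := hinner.log (hD x hx0 i).ne'
      have hlog2 : HasDerivAt (fun t : ℝ => y i * Real.log t) (y i / x) x := by
        have := (Real.hasDerivAt_log hx0.ne').const_mul (y i)
        simpa [div_eq_mul_inv] using this
      exact hlog.sub hlog2
    rw [hderiv.deriv]
    have hterm : ∀ i, p i / (x * p i + 1 - p i) - y i / x
        = (x * p i / (x * p i + 1 - p i) - y i) / x := by
      intro i
      have h1 := (hD x hx0 i).ne'
      field_simp
    rw [Finset.sum_congr rfl fun i _ => hterm i, ← Finset.sum_div]
    apply div_pos _ hx0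
    rw [Finset.sum_sub_distrib, ← hstat, sub_pos]
    have hne : (Finset.univ : Finset (Fin n)).Nonempty := by
      have : Nonempty (Fin n) := ⟨⟨0, hn⟩⟩
      exact Finset.univ_nonempty
    apply Finset.sum_lt_sum_of_nonempty hne
    intro i _
    have h1 := (hp i).1; have h2 := (hp i).2
    have hd1 := hD Δ₀ hΔ₀ i
    have hd2 := hD x hx0 i
    have hlt : Δ₀ < x := hx
    rw [div_lt_div_iff₀ hd1 hd2]
    nlinarith [mul_pos (mul_pos h1 (sub_pos.2 h2)) (sub_pos.2 hlt)]
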